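/- Let μ ∈ (0, 1/2) and let M be the 2×2 matrix with rows (−1, 1) and (−μ(1−μ), −2). Suppose Y : [0,∞) → ℝ² is continuously differentiable, Y(s) ≠ 0 for all s ≥ 0, |Y(s)| → 0 as s → ∞, and there is K > 0 with |Y'(s) − M·Y(s)| ≤ K|Y(s)|² for all s ≥ 0. Then there exists c ∈ (0,1) such that c·e^{−5s} ≤ |Y(s)|² ≤ c^{−1}·e^{−(3/2)s} for all s ≥ 0. -/

import Mathlib

open scoped Topology

/-- The action of the matrix `M = [[-1, 1], [-μ(1-μ), -2]]` on a vector of `ℝ²`. -/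
noncomputable def Mmul (μ : ℝ) (v : EuclideanSpace ℝ (Fin 2)) : EuclideanSpace ℝ (Fin 2) :=
  (EuclideanSpace.equiv (Fin 2) ℝ).symm ![-v 0 + v 1, -(μ * (1 - μ)) * v 0 - 2 * v 1]

lemma inner_Mmul (μ : ℝ) (v : EuclideanSpace ℝ (Fin 2)) :
    (inner ℝ (Mmul μ v) v : ℝ) = -(v 0)^2 + (1 - μ*(1-μ)) * (v 0 * v 1) - 2*(v 1)^2 := by
  simp [Mmul, PiLp.inner_apply, Fin.sum_univ_two]
  ring

lemma normsq_eq (v : EuclideanSpace ℝ (Fin 2)) : ‖v‖^2 = (v 0)^2 + (v 1)^2 := by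
  rw [← real_inner_self_eq_norm_sq, PiLp.inner_apply, Fin.sum_univ_two]
  simp [sq]

set_option maxHeartbeats 2000000 in
/-- Two-sided exponential bounds for solutions of the perturbed linear system
`|Y' - M·Y| ≤ K|Y|²` with `M = [[-1, 1], [-μ(1-μ), -2]]`: if `Y` never vanishes and
`|Y(s)| → 0`, then `c·e^(-5s) ≤ |Y(s)|² ≤ c⁻¹·e^(-(3/2)s)` for all `s ≥ 0`. -/
theorem ode_modulus_bounds (μ : ℝ) (hμ : 0 < μ) (hμ' : μ < 1 / 2)
    (Y : ℝ → EuclideanSpace ℝ (Fin 2))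
    (hY_C1 : ContDiffOn ℝ 1 Y (Set.Ici 0))
    (hY_ne : ∀ s : ℝ, 0 ≤ s → Y s ≠ 0)
    (hY_lim : Filter.Tendsto (fun s => ‖Y s‖) Filter.atTop (𝓝 0))
    (K : ℝ) (hK : 0 < K)
    (hY_ode : ∀ s : ℝ, 0 ≤ s →
      ‖derivWithin Y (Set.Ici 0) s - Mmul μ (Y s)‖ ≤ K * ‖Y s‖ ^ 2) :
    ∃ c : ℝ, 0 < c ∧ c < 1 ∧ ∀ s : ℝ, 0 ≤ s →
      c * Real.exp (-5 * s) ≤ ‖Y s‖ ^ 2 ∧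
      ‖Y s‖ ^ 2 ≤ c⁻¹ * Real.exp (-(3 / 2) * s) := by
  classical
  set a : ℝ := μ * (1 - μ) with ha_def
  have ha : 0 < a := mul_pos hμ (by linarith)
  have ha1 : a ≤ 1/4 := by nlinarith [sq_nonneg (μ - 1/2)]
  set b : ℝ := 1 - a with hb_def
  have hb0 : (3:ℝ)/4 ≤ b := by simp only [hb_def]; linarith
  have hb1 : b < 1 := by simp only [hb_def]; linarith
  set δ2 : ℝ := (5/4 - b^2)/3 with hδ2_def
  have hδ2 : 0 < δ2 := by simp only [hδ2_def]; nlinarith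
  have hδ2' : δ2 < 1/2 := by simp only [hδ2_def]; nlinarith
  set δ : ℝ := min a δ2 with hδ_def
  have hδ : 0 < δ := lt_min ha hδ2
  -- quadratic form bounds
  have hQlow : ∀ v : EuclideanSpace ℝ (Fin 2),
      (-5 + a) * ‖v‖^2 ≤ 2 * (inner ℝ (Mmul μ v) v : ℝ) := by
    intro v
    rw [inner_Mmul, normsq_eq]
    have hb : (1:ℝ) - μ*(1-μ) = b := by simp [hb_def, ha_def]
    rw [hb]
    nlinarith [sq_nonneg (v 0 + v 1), sq_nonneg (v 0), sq_nonneg (v 1)]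
  have hQhigh : ∀ v : EuclideanSpace ℝ (Fin 2),
      2 * (inner ℝ (Mmul μ v) v : ℝ) ≤ (-(3/2) - δ2) * ‖v‖^2 := by
    intro v
    rw [inner_Mmul, normsq_eq]
    have hb : (1:ℝ) - μ*(1-μ) = b := by simp [hb_def, ha_def]
    rw [hb]
    have key : (1/2 - δ2) * (5/2 - δ2) - b^2 = δ2^2 := by
      simp only [hδ2_def]; ring
    nlinarith [sq_nonneg ((1/2 - δ2) * v 0 - b * v 1), sq_nonneg (δ2 * v 1),
      sq_nonneg (v 1), hδ2, hδ2']
  -- differentiability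
  have hY_dw : ∀ s : ℝ, 0 ≤ s →
      HasDerivWithinAt Y (derivWithin Y (Set.Ici 0) s) (Set.Ici 0) s := by
    intro s hs
    exact ((hY_C1.differentiableOn one_ne_zero) s hs).hasDerivWithinAt
  have hY_cont : ContinuousOn Y (Set.Ici 0) := hY_C1.continuousOn
  have hRcont : ContinuousOn (fun t => ‖Y t‖^2) (Set.Ici 0) := (hY_cont.norm).pow 2
  -- choose s₁ beyond which the perturbation is dominated
  obtain ⟨s₀, hs₀⟩ := Filter.eventually_atTop.mp
    (hY_lim.eventually_lt_const (show (0:ℝ) < δ/(2*K) by positivity))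
  set s₁ : ℝ := max s₀ 1 with hs₁_def
  have hs₁pos : (0:ℝ) < s₁ := lt_of_lt_of_le one_pos (le_max_right _ _)
  have hsmall : ∀ s : ℝ, s₁ ≤ s → 2 * K * ‖Y s‖ ≤ δ := by
    intro s hs
    have h := hs₀ s (le_trans (le_max_left _ _) hs)
    rw [lt_div_iff₀ (by positivity)] at h
    nlinarith
  -- derivative of ‖Y‖² at interior points
  have hR_deriv : ∀ s : ℝ, 0 < s → HasDerivAt (fun t => ‖Y t‖^2)
      (2 * (inner ℝ (derivWithin Y (Set.Ici 0) s) (Y s) : ℝ)) s := by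
    intro s hs
    have hYat : HasDerivAt Y (derivWithin Y (Set.Ici 0) s) s :=
      (hY_dw s hs.le).hasDerivAt (Ici_mem_nhds hs)
    have h := HasDerivAt.inner ℝ hYat hYat
    have heq : (fun t => (inner ℝ (Y t) (Y t) : ℝ)) = fun t => ‖Y t‖^2 := by
      funext t; exact real_inner_self_eq_norm_sq (Y t)
    rw [heq] at h
    refine h.congr_deriv ?_
    rw [real_inner_comm]
    ring
  -- differential inequalities for s ≥ s₁
  have hIneq : ∀ s : ℝ, s₁ ≤ s →
      (-5 * ‖Y s‖^2 ≤ 2 * (inner ℝ (derivWithin Y (Set.Ici 0) s) (Y s) : ℝ) ∧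
       2 * (inner ℝ (derivWithin Y (Set.Ici 0) s) (Y s) : ℝ) ≤ -(3/2) * ‖Y s‖^2) := by
    intro s hs
    have hs0 : (0:ℝ) ≤ s := le_trans hs₁pos.le hs
    set Y' := derivWithin Y (Set.Ici 0) s
    have hsplit : (inner ℝ Y' (Y s) : ℝ)
        = (inner ℝ (Mmul μ (Y s)) (Y s) : ℝ) + (inner ℝ (Y' - Mmul μ (Y s)) (Y s) : ℝ) := by
      rw [← inner_add_left]
      congr 1
      abel
    have hpert : |(inner ℝ (Y' - Mmul μ (Y s)) (Y s) : ℝ)| ≤ K * ‖Y s‖^2 * ‖Y s‖ := by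
      refine le_trans (abs_real_inner_le_norm _ _) ?_
      exact mul_le_mul_of_nonneg_right (hY_ode s hs0) (norm_nonneg _)
    have hKs : 2 * (K * ‖Y s‖^2 * ‖Y s‖) ≤ δ * ‖Y s‖^2 := by
      have h2 := hsmall s hs
      nlinarith [sq_nonneg (‖Y s‖), norm_nonneg (Y s)]
    have habs := abs_le.mp hpert
    have hδa : δ ≤ a := min_le_left _ _
    have hδ2le : δ ≤ δ2 := min_le_right _ _
    have hRnn : (0:ℝ) ≤ ‖Y s‖^2 := sq_nonneg _
    have hma : δ * ‖Y s‖^2 ≤ a * ‖Y s‖^2 := mul_le_mul_of_nonneg_right hδa hRnn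
    have hmd : δ * ‖Y s‖^2 ≤ δ2 * ‖Y s‖^2 := mul_le_mul_of_nonneg_right hδ2le hRnn
    constructor
    · have h5 := hQlow (Y s)
      rw [hsplit]
      linarith
    · have h5 := hQhigh (Y s)
      rw [hsplit]
      linarith
  -- monotonicity of exp(5t)‖Y t‖²
  have hIci : Set.Ici s₁ ⊆ Set.Ici (0:ℝ) := Set.Ici_subset_Ici.mpr hs₁pos.le
  have hFmono : MonotoneOn (fun t => Real.exp (5*t) * ‖Y t‖^2) (Set.Ici s₁) := by
    have hFder : ∀ s ∈ interior (Set.Ici s₁), HasDerivAt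
        (fun t => Real.exp (5*t) * ‖Y t‖^2)
        (5 * Real.exp (5*s) * ‖Y s‖^2 +
          Real.exp (5*s) * (2 * (inner ℝ (derivWithin Y (Set.Ici 0) s) (Y s) : ℝ))) s := by
      intro s hs
      rw [interior_Ici] at hs
      have hspos : 0 < s := lt_trans hs₁pos hs
      have he : HasDerivAt (fun t : ℝ => Real.exp (5*t)) (Real.exp (5*s) * 5) s := by
        simpa using ((hasDerivAt_id s).const_mul 5).exp
      have := he.mul (hR_deriv s hspos)
      refine this.congr_deriv ?_
      ring
    refine monotoneOn_of_deriv_nonneg (convex_Ici s₁) ?_ ?_ ?_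
    · exact ((Real.continuous_exp.comp (continuous_const.mul continuous_id)).continuousOn).mul
        (hRcont.mono hIci)
    · intro s hs
      exact (hFder s hs).differentiableAt.differentiableWithinAt
    · intro s hs
      rw [(hFder s hs).deriv]
      rw [interior_Ici] at hs
      have h1 := (hIneq s hs.le).1
      have he := (Real.exp_pos (5*s)).le
      have h0 : 0 ≤ Real.exp (5*s) * (5 * ‖Y s‖^2 +
          2 * (inner ℝ (derivWithin Y (Set.Ici 0) s) (Y s) : ℝ)) :=
        mul_nonneg he (by linarith)
      linarith [h0, (by ring : Real.exp (5*s) * (5 * ‖Y s‖^2 +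
          2 * (inner ℝ (derivWithin Y (Set.Ici 0) s) (Y s) : ℝ))
        = 5 * Real.exp (5*s) * ‖Y s‖^2 +
          Real.exp (5*s) * (2 * (inner ℝ (derivWithin Y (Set.Ici 0) s) (Y s) : ℝ)))]
  have hGanti : AntitoneOn (fun t => Real.exp ((3/2)*t) * ‖Y t‖^2) (Set.Ici s₁) := by
    have hGder : ∀ s ∈ interior (Set.Ici s₁), HasDerivAt
        (fun t => Real.exp ((3/2)*t) * ‖Y t‖^2)
        ((3/2) * Real.exp ((3/2)*s) * ‖Y s‖^2 +
          Real.exp ((3/2)*s) * (2 * (inner ℝ (derivWithin Y (Set.Ici 0) s) (Y s) : ℝ))) s := by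
      intro s hs
      rw [interior_Ici] at hs
      have hspos : 0 < s := lt_trans hs₁pos hs
      have he : HasDerivAt (fun t : ℝ => Real.exp ((3/2)*t)) (Real.exp ((3/2)*s) * (3/2)) s := by
        simpa using ((hasDerivAt_id s).const_mul (3/2)).exp
      have := he.mul (hR_deriv s hspos)
      refine this.congr_deriv ?_
      ring
    refine antitoneOn_of_deriv_nonpos (convex_Ici s₁) ?_ ?_ ?_
    · exact ((Real.continuous_exp.comp (continuous_const.mul continuous_id)).continuousOn).mul
        (hRcont.mono hIci)
    · intro s hs
      exact (hGder s hs).differentiableAt.differentiableWithinAt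
    · intro s hs
      rw [(hGder s hs).deriv]
      rw [interior_Ici] at hs
      have h1 := (hIneq s hs.le).2
      have he := (Real.exp_pos ((3/2)*s)).le
      have h0 : Real.exp ((3/2)*s) * ((3/2) * ‖Y s‖^2 +
          2 * (inner ℝ (derivWithin Y (Set.Ici 0) s) (Y s) : ℝ)) ≤ 0 :=
        mul_nonpos_of_nonneg_of_nonpos he (by linarith)
      linarith [h0, (by ring : Real.exp ((3/2)*s) * ((3/2) * ‖Y s‖^2 +
          2 * (inner ℝ (derivWithin Y (Set.Ici 0) s) (Y s) : ℝ))
        = (3/2) * Real.exp ((3/2)*s) * ‖Y s‖^2 +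
          Real.exp ((3/2)*s) * (2 * (inner ℝ (derivWithin Y (Set.Ici 0) s) (Y s) : ℝ)))]
  -- min and max on [0, s₁]
  have hIccsub : Set.Icc (0:ℝ) s₁ ⊆ Set.Ici 0 := Set.Icc_subset_Ici_self
  obtain ⟨xm, hxm, hxmmin⟩ := isCompact_Icc.exists_isMinOn
    (Set.nonempty_Icc.mpr hs₁pos.le) (hRcont.mono hIccsub)
  obtain ⟨xM, hxM, hxMmax⟩ := isCompact_Icc.exists_isMaxOn
    (Set.nonempty_Icc.mpr hs₁pos.le) (hRcont.mono hIccsub)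
  set m : ℝ := ‖Y xm‖^2 with hm_def
  set MX : ℝ := ‖Y xM‖^2 with hMX_def
  have hm : 0 < m := pow_pos (norm_pos_iff.mpr (hY_ne xm hxm.1)) 2
  have hMX : 0 < MX := pow_pos (norm_pos_iff.mpr (hY_ne xM hxM.1)) 2
  have hmle : ∀ s : ℝ, s ∈ Set.Icc 0 s₁ → m ≤ ‖Y s‖^2 := fun s hs => hxmmin hs
  have hMXge : ∀ s : ℝ, s ∈ Set.Icc 0 s₁ → ‖Y s‖^2 ≤ MX := fun s hs => hxMmax hs
  set C₂ : ℝ := Real.exp ((3/2)*s₁) * MX with hC₂_def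
  have hC₂ : 0 < C₂ := mul_pos (Real.exp_pos _) hMX
  -- lower bound for all s ≥ 0 : m * exp(-5s) ≤ ‖Y s‖²
  have hlowall : ∀ s : ℝ, 0 ≤ s → m * Real.exp (-5 * s) ≤ ‖Y s‖^2 := by
    intro s hs
    rcases le_or_gt s s₁ with h | h
    · have h1 : Real.exp (-5*s) ≤ 1 := Real.exp_le_one_iff.mpr (by nlinarith)
      have := hmle s ⟨hs, h⟩
      nlinarith [Real.exp_pos (-5*s)]
    · have hmono := hFmono (Set.self_mem_Ici) (show s ∈ Set.Ici s₁ from h.le) h.le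
      simp only at hmono
      have h1 : (1:ℝ) ≤ Real.exp (5*s₁) := Real.one_le_exp (by nlinarith)
      have h2 : m ≤ Real.exp (5*s₁) * ‖Y s₁‖^2 := by
        have := hmle s₁ ⟨hs₁pos.le, le_rfl⟩
        nlinarith [sq_nonneg (‖Y s₁‖)]
      have h3 : m ≤ Real.exp (5*s) * ‖Y s‖^2 := le_trans h2 hmono
      have h4 : Real.exp (-5*s) = (Real.exp (5*s))⁻¹ := by
        rw [← Real.exp_neg]; ring_nf
      rw [h4, mul_inv_le_iff₀ (Real.exp_pos _)]
      linarith [h3]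
  -- upper bound for all s ≥ 0 : ‖Y s‖² ≤ C₂ * exp(-(3/2)s)
  have hhighall : ∀ s : ℝ, 0 ≤ s → ‖Y s‖^2 ≤ C₂ * Real.exp (-(3/2) * s) := by
    intro s hs
    rcases le_or_gt s s₁ with h | h
    · have h0 := hMXge s ⟨hs, h⟩
      have h1 : MX ≤ C₂ * Real.exp (-(3/2) * s) := by
        have : C₂ * Real.exp (-(3/2) * s) = MX * Real.exp ((3/2) * (s₁ - s)) := by
          rw [hC₂_def, mul_comm (Real.exp _) MX, mul_assoc, ← Real.exp_add]
          ring_nf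
        rw [this]
        nlinarith [Real.one_le_exp (show (0:ℝ) ≤ (3/2) * (s₁ - s) by nlinarith)]
      linarith
    · have hmono := hGanti (Set.self_mem_Ici) (show s ∈ Set.Ici s₁ from h.le) h.le
      simp only at hmono
      have h2 : Real.exp ((3/2)*s) * ‖Y s‖^2 ≤ C₂ := by
        refine le_trans hmono ?_
        rw [hC₂_def]
        exact mul_le_mul_of_nonneg_left (hMXge s₁ ⟨hs₁pos.le, le_rfl⟩) (Real.exp_pos _).le
      have h4 : Real.exp (-(3/2)*s) = (Real.exp ((3/2)*s))⁻¹ := by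
        rw [← Real.exp_neg]; ring_nf
      rw [h4, mul_comm C₂, ← div_eq_inv_mul, le_div_iff₀ (Real.exp_pos _)]
      linarith [h2]
  -- choose c
  refine ⟨min (1/2) (min m C₂⁻¹), ?_, ?_, ?_⟩
  · exact lt_min (by norm_num) (lt_min hm (by positivity))
  · exact lt_of_le_of_lt (min_le_left _ _) (by norm_num)
  · intro s hs
    set c : ℝ := min (1/2) (min m C₂⁻¹) with hc_def
    have hc0 : 0 < c := lt_min (by norm_num) (lt_min hm (by positivity))
    have hcm : c ≤ m := le_trans (min_le_right _ _) (min_le_left _ _)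
    have hcC : c ≤ C₂⁻¹ := le_trans (min_le_right _ _) (min_le_right _ _)
    constructor
    · refine le_trans ?_ (hlowall s hs)
      exact mul_le_mul_of_nonneg_right hcm (Real.exp_pos _).le
    · refine le_trans (hhighall s hs) ?_
      have : C₂ ≤ c⁻¹ := by
        rw [← inv_inv C₂]
        exact inv_anti₀ hc0 hcC
      exact mul_le_mul_of_nonneg_right this (Real.exp_pos _).le
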